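/- arXiv:1901.04577 — 11 statements merged into one kernel-verified Lean document; each statement's English description precedes it below -/
import Mathlib

section
/- Let R be a valuation domain and S ⊆ Spec(R) a non-empty set of prime ideals with no maximal element with respect to inclusion. Then the union ⋃S is an idempotent prime ideal of R. -/
/-- Over a valuation domain, the union of a non-empty set of prime ideals with no
maximal element (with respect to inclusion) is an idempotent prime ideal. -/
theorem union_of_primes_no_max_is_idempotent_prime
    {R : Type*} [CommRing R] [IsDomain R]
    (hchain : ∀ I J : Ideal R, I ≤ J ∨ J ≤ I)
    (S : Set (Ideal R)) (hprime : ∀ p ∈ S, p.IsPrime) (hne : S.Nonempty)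
    (hnomax : ∀ p ∈ S, ∃ q ∈ S, p < q) :
    ∃ P : Ideal R, ((P : Set R) = ⋃ p ∈ S, (p : Set R)) ∧ P.IsPrime ∧ P * P = P := by
  have hdir : DirectedOn (· ≤ ·) S := fun p hp q hq =>
    (hchain p q).elim (fun h => ⟨q, hq, h, le_refl q⟩) (fun h => ⟨p, hp, le_refl p, h⟩)
  have hmem : ∀ x : R, x ∈ sSup S ↔ ∃ p ∈ S, x ∈ p := fun x =>
    Submodule.mem_sSup_of_directed hne hdir
  refine ⟨sSup S, ?_, ?_, ?_⟩
  · ext x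
    simp only [SetLike.mem_coe, hmem, Set.mem_iUnion, SetLike.mem_coe, exists_prop]
  · constructor
    · intro h
      obtain ⟨p, hp⟩ := hne
      obtain ⟨q, hq, hq1⟩ := (hmem 1).mp (h ▸ Submodule.mem_top)
      exact (hprime q hq).ne_top ((Ideal.eq_top_iff_one q).mpr hq1)
    · intro x y hxy
      obtain ⟨p, hp, hxyp⟩ := (hmem (x * y)).mp hxy
      rcases (hprime p hp).mem_or_mem hxyp with h | h
      · exact Or.inl (le_sSup hp h)
      · exact Or.inr (le_sSup hp h)
  · refine le_antisymm Ideal.mul_le_right ?_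
    intro x hx
    obtain ⟨p, hp, hxp⟩ := (hmem x).mp hx
    obtain ⟨q, hq, hpq⟩ := hnomax p hp
    obtain ⟨y, hyq, hyp⟩ := Set.exists_of_ssubset hpq
    rcases hchain (Ideal.span {x}) (Ideal.span {y}) with h | h
    · -- y ∣ x
      obtain ⟨z, hz⟩ := (Ideal.span_singleton_le_span_singleton).mp h
      have hzp : z ∈ p := ((hprime p hp).mem_or_mem (hz ▸ hxp)).resolve_left hyp
      have : y * z ∈ sSup S * sSup S :=
        Ideal.mul_mem_mul (le_sSup hq hyq) (le_sSup hp hzp)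
      rwa [← hz] at this
    · -- x ∣ y
      obtain ⟨z, hz⟩ := (Ideal.span_singleton_le_span_singleton).mp h
      exact absurd (hz ▸ p.mul_mem_right z hxp) hyp
end

section
/- Let R be a valuation domain and p a prime ideal of R. Then either p is idempotent (p² = p), or the extension p·R_p of p in the localization R_p is a principal ideal of R_p. -/
/-- Over a valuation domain, any prime ideal `p` is either idempotent or its extension
to the localization `R_p` is a principal ideal. -/
theorem prime_idempotent_or_principal_in_localization
    {R : Type*} [CommRing R] [IsDomain R]
    (hchain : ∀ I J : Ideal R, I ≤ J ∨ J ≤ I)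
    (p : Ideal R) (hp : p.IsPrime) :
    p * p = p ∨
      (p.map (algebraMap R (Localization.AtPrime p))).IsPrincipal := by
  by_cases h : p * p = p
  · exact Or.inl h
  right
  have hlt : p * p < p := lt_of_le_of_ne (Ideal.mul_le_left.trans le_rfl) h
  obtain ⟨x, hxp, hxpp⟩ := SetLike.exists_of_lt hlt
  set f := algebraMap R (Localization.AtPrime p) with hf
  refine ⟨⟨f x, le_antisymm ?_ ?_⟩⟩
  · rw [Ideal.map_le_iff_le_comap]
    intro y hy
    simp only [Ideal.mem_comap]
    rcases hchain (Ideal.span {y}) (Ideal.span {x}) with hc | hc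
    · obtain ⟨r, hr⟩ := Ideal.mem_span_singleton'.mp (hc (Ideal.mem_span_singleton_self y))
      rw [← hr, map_mul]
      exact Ideal.mul_mem_left _ _ (Ideal.mem_span_singleton_self _)
    · obtain ⟨r, hr⟩ := Ideal.mem_span_singleton'.mp (hc (Ideal.mem_span_singleton_self x))
      have hrp : r ∉ p := by
        intro hrp
        exact hxpp (hr ▸ Ideal.mul_mem_mul hrp hy)
      have hu : IsUnit (f r) :=
        IsLocalization.map_units (Localization.AtPrime p) (⟨r, hrp⟩ : p.primeCompl)
      have : f y = ↑hu.unit⁻¹ * f x := by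
        rw [← hr, map_mul, ← mul_assoc, IsUnit.val_inv_mul, one_mul]
      rw [this]
      exact Ideal.mul_mem_left _ _ (Ideal.mem_span_singleton_self _)
  · exact (Submodule.span_singleton_le_iff_mem _ _).mpr (Ideal.mem_map_of_mem f hxp)
end

section
/- Let R be a valuation domain, I a proper ideal of R, and q a prime ideal of R. Then the following are equivalent: (i) I^# ⊆ q; (ii) I is a module over the localization R_q, i.e., sI = I for all s ∈ R \ q; (iii) R/I is q-torsion-free, i.e., for every r ∈ R with rs ∈ I for some s ∈ R \ q, one has r ∈ I. -/
/-- Over a valuation domain, for a proper ideal `I` and a prime ideal `q`, the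
conditions (i) `I^# ⊆ q`, (ii) `sI = I` for all `s ∉ q` (i.e. `I` is an
`R_q`-module), and (iii) `R/I` is `q`-torsion-free, are all equivalent. -/
theorem attached_prime_le_iff_localized_iff_torsionFree
    {R : Type*} [CommRing R] [IsDomain R]
    (hchain : ∀ I J : Ideal R, I ≤ J ∨ J ≤ I)
    (I : Ideal R) (hI : I ≠ ⊤) (q : Ideal R) (hq : q.IsPrime) :
    ((∀ r : R, Ideal.span {r} * I ≠ I → r ∈ q) ↔
      (∀ s : R, s ∉ q → Ideal.span {s} * I = I)) ∧
    ((∀ s : R, s ∉ q → Ideal.span {s} * I = I) ↔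
      (∀ r s : R, s ∉ q → r * s ∈ I → r ∈ I)) := by
  constructor
  · constructor
    · intro h s hs
      by_contra hne
      exact hs (h s hne)
    · intro h r hr
      by_contra hrq
      exact hr (h r hrq)
  · constructor
    · -- (ii) → (iii)
      intro h r s hs hrs
      have hsne : s ≠ 0 := fun h0 => hs (h0 ▸ q.zero_mem)
      have : r * s ∈ Ideal.span {s} * I := (h s hs).symm ▸ hrs
      rw [Ideal.mem_span_singleton_mul] at this
      obtain ⟨y, hy, hxy⟩ := this
      have : s * y = s * r := by rw [hxy]; ring
      exact mul_left_cancel₀ hsne this ▸ hy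
    · -- (iii) → (ii)
      intro h s hs
      apply le_antisymm
      · exact Ideal.mul_le.mpr fun a ha b hb => I.mul_mem_left a hb
      · intro x hx
        rcases hchain (Ideal.span {x}) (Ideal.span {s}) with hle | hle
        · obtain ⟨t, ht⟩ := Ideal.span_singleton_le_span_singleton.mp hle
          rw [Ideal.mem_span_singleton_mul]
          refine ⟨t, ?_, ht.symm⟩
          exact h t s hs (by rw [mul_comm, ← ht]; exact hx)
        · obtain ⟨t, ht⟩ := Ideal.span_singleton_le_span_singleton.mp hle
          have hxq : x ∉ q := fun hxq => hs (ht ▸ q.mul_mem_right t hxq)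
          exact absurd (I.eq_top_iff_one.mpr (h 1 x hxq (by rwa [one_mul]))) hI
end

section
/- Let R be a valuation domain, p an idempotent prime ideal of R, and N an R-module. Then p ⊗_R N = 0 if and only if pN = 0. -/
/-- Over a valuation domain, for an idempotent prime ideal `p` and any module `N`,
`p ⊗[R] N = 0` if and only if `pN = 0`. -/
theorem idempotent_prime_tensor_eq_zero_iff_smul_eq_zero
    {R : Type*} [CommRing R] [IsDomain R]
    (hchain : ∀ I J : Ideal R, I ≤ J ∨ J ≤ I)
    (p : Ideal R) (hp : p.IsPrime) (hidem : p * p = p)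
    (N : Type*) [AddCommGroup N] [Module R N] :
    Subsingleton (TensorProduct R ↥p N) ↔ p • (⊤ : Submodule R N) = ⊥ := by
  constructor
  · intro hsub
    -- pN is the image of p ⊗ N under the action map
    apply le_bot_iff.mp
    refine Submodule.smul_le.mpr ?_
    intro a ha n _
    let f : TensorProduct R ↥p N →ₗ[R] N :=
      TensorProduct.lift ((LinearMap.lsmul R N).comp p.subtype)
    have h1 : f ((⟨a, ha⟩ : ↥p) ⊗ₜ[R] n) = a • n := rfl
    have h2 : ((⟨a, ha⟩ : ↥p) ⊗ₜ[R] n) = 0 := Subsingleton.elim _ _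
    rw [h2, map_zero] at h1
    simp [← h1]
  · intro hsmul
    -- every pure tensor is zero, using p = p * p
    have key : ∀ (a : R) (ha : a ∈ p) (n : N), (⟨a, ha⟩ : ↥p) ⊗ₜ[R] n = 0 := by
      intro a ha
      have ha' : a ∈ p * p := by rw [hidem]; exact ha
      refine Submodule.mul_induction_on' (C := fun a _ => ∀ (h : a ∈ p) (n : N),
        (⟨a, h⟩ : ↥p) ⊗ₜ[R] n = 0) ?_ ?_ ha' ha
      · intro b hb c hc h n
        have hzero : c • n = 0 := by
          have : c • n ∈ p • (⊤ : Submodule R N) :=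
            Submodule.smul_mem_smul hc Submodule.mem_top
          rwa [hsmul, Submodule.mem_bot] at this
        have heq : (⟨b * c, h⟩ : ↥p) = c • (⟨b, hb⟩ : ↥p) := by
          ext; simp [mul_comm]
        rw [heq, TensorProduct.smul_tmul, hzero, TensorProduct.tmul_zero]
      · intro x hx y hy ihx ihy h n
        have hx' : x ∈ p := by rw [← hidem]; exact hx
        have hy' : y ∈ p := by rw [← hidem]; exact hy
        have : (⟨x + y, h⟩ : ↥p) = (⟨x, hx'⟩ : ↥p) + ⟨y, hy'⟩ := rfl
        rw [this, TensorProduct.add_tmul, ihx hx', ihy hy', add_zero]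
    constructor
    intro x y
    have hz : ∀ z : TensorProduct R ↥p N, z = 0 := by
      intro z
      induction z using TensorProduct.induction_on with
      | zero => rfl
      | tmul a n => exact key a a.2 n
      | add u v hu hv => rw [hu, hv, add_zero]
    rw [hz x, hz y]
end

section
/- Let R be a valuation domain with prime ideals q ⊊ p where p is idempotent, and let M be an R-module. Then Tor_1^R(R_q/p, M) = 0 if and only if p·Γ_q(M) = 0, where Γ_q(M) is the q-torsion submodule of M (the kernel of the localization map M → M_q). -/
open CategoryTheory

open TensorProduct LinearMap

section ModulePart

variable {R : Type} [CommRing R]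

-- divisibility is total
theorem dvd_total' (hchain : ∀ I J : Ideal R, I ≤ J ∨ J ≤ I) (a b : R) : a ∣ b ∨ b ∣ a := by
  rcases hchain (Ideal.span {a}) (Ideal.span {b}) with h | h
  · exact Or.inr ((Ideal.span_singleton_le_span_singleton).1 h)
  · exact Or.inl ((Ideal.span_singleton_le_span_singleton).1 h)

theorem factor2' (hchain : ∀ I J : Ideal R, I ≤ J ∨ J ≤ I) {p : Ideal R} (hidem : p * p = p)
    {a : R} (ha : a ∈ p) : ∃ y ∈ p, ∃ z ∈ p, a = y * z := by
  rw [← hidem] at ha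
  refine Submodule.mul_induction_on ha (fun m hm n hn => ⟨m, hm, n, hn, rfl⟩) ?_
  rintro x y ⟨y₁, hy₁, z₁, hz₁, rfl⟩ ⟨y₂, hy₂, z₂, hz₂, rfl⟩
  rcases dvd_total' hchain y₁ y₂ with ⟨c, rfl⟩ | ⟨c, rfl⟩
  · exact ⟨y₁, hy₁, z₁ + c * z₂, p.add_mem hz₁ (p.mul_mem_left c hz₂), by ring⟩
  · exact ⟨y₂, hy₂, z₂ + c * z₁, p.add_mem hz₂ (p.mul_mem_left c hz₁), by ring⟩

-- structure of elements of (image of p) ⊗ Q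
theorem pure_tensor' (hchain : ∀ I J : Ideal R, I ≤ J ∨ J ≤ I) {p : Ideal R}
    {A : Type} [CommRing A] [Algebra R A]
    (htp : ∃ t, t ∈ p)
    (Q : Type) [AddCommGroup Q] [Module R Q]
    (z : (Submodule.map (Algebra.linearMap R A) p) ⊗[R] Q) :
    ∃ (a : R) (ha : a ∈ p) (m : Q),
      z = (⟨Algebra.linearMap R A a, Submodule.mem_map_of_mem ha⟩ : Submodule.map (Algebra.linearMap R A) p) ⊗ₜ[R] m := by
  obtain ⟨t, htp⟩ := htp
  induction z with
  | zero => exact ⟨t, htp, 0, (tmul_zero _ _).symm⟩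
  | tmul x m =>
    obtain ⟨a, ha, hax⟩ := x.2
    exact ⟨a, ha, m, by rw [show x = ⟨Algebra.linearMap R A a, Submodule.mem_map_of_mem ha⟩ from Subtype.ext hax.symm]⟩
  | add z₁ z₂ ih₁ ih₂ =>
    obtain ⟨a, ha, m₁, rfl⟩ := ih₁
    obtain ⟨b, hb, m₂, rfl⟩ := ih₂
    rcases dvd_total' hchain a b with ⟨c, rfl⟩ | ⟨c, rfl⟩
    · refine ⟨a, ha, m₁ + c • m₂, ?_⟩
      have : (⟨Algebra.linearMap R A (a * c), Submodule.mem_map_of_mem hb⟩ :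
          Submodule.map (Algebra.linearMap R A) p) =
          c • ⟨Algebra.linearMap R A a, Submodule.mem_map_of_mem ha⟩ := by
        apply Subtype.ext
        simp [mul_comm, Algebra.smul_def]
      rw [this, smul_tmul, tmul_add]
    · refine ⟨b, hb, m₂ + c • m₁, ?_⟩
      have : (⟨Algebra.linearMap R A (b * c), Submodule.mem_map_of_mem ha⟩ :
          Submodule.map (Algebra.linearMap R A) p) =
          c • ⟨Algebra.linearMap R A b, Submodule.mem_map_of_mem hb⟩ := by
        apply Subtype.ext
        simp [mul_comm, Algebra.smul_def]
      rw [this, smul_tmul, tmul_add, add_comm]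

end ModulePart

section Loc

variable {R : Type} [CommRing R] [IsDomain R]
  (q : Ideal R) [hq : q.IsPrime]
  (M : Type) [AddCommGroup M] [Module R M]

local notation "A" => Localization.AtPrime q
local notation "Γ" => LinearMap.ker (LocalizedModule.mkLinearMap q.primeCompl M)

noncomputable def eAM : A ⊗[R] M ≃ₗ[A] LocalizedModule q.primeCompl M :=
  (IsLocalizedModule.isBaseChange q.primeCompl A
    (LocalizedModule.mkLinearMap q.primeCompl M)).equiv

theorem tmul_one_eq_zero_iff (x : M) :
    ((1 : A) ⊗ₜ[R] x : A ⊗[R] M) = 0 ↔ x ∈ Γ := by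
  have h : eAM q M ((1 : A) ⊗ₜ[R] x) = LocalizedModule.mkLinearMap q.primeCompl M x := by
    rw [eAM, IsBaseChange.equiv_tmul, one_smul]
  constructor
  · intro h0
    have := congrArg (eAM q M) h0
    rw [h, map_zero] at this
    simpa [LinearMap.mem_ker] using this
  · intro hx
    apply (eAM q M).injective
    rw [h, map_zero]
    simpa [LinearMap.mem_ker] using hx

theorem jtmul_eq_zero_iff (a : R) (x : M) :
    ((Algebra.linearMap R A a) ⊗ₜ[R] x : A ⊗[R] M) = 0 ↔ a • x ∈ Γ := by
  have : (Algebra.linearMap R A a) ⊗ₜ[R] x = (1 : A) ⊗ₜ[R] (a • x) := by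
    rw [← smul_tmul]
    simp [Algebra.smul_def]
  rw [this, tmul_one_eq_zero_iff]

theorem torsion_of_smul_torsion {t : R} (ht : t ∉ q) {x : M}
    (hx : t • x ∈ Γ) : x ∈ Γ := by
  have hu : IsUnit (algebraMap R A t) := IsLocalization.map_units A (⟨t, ht⟩ : q.primeCompl)
  rw [LinearMap.mem_ker] at hx ⊢
  rw [map_smul] at hx
  have : (algebraMap R A t) • (LocalizedModule.mkLinearMap q.primeCompl M x) = 0 := by
    rw [algebraMap_smul]; exact hx
  exact (hu.smul_eq_zero).1 this

end Loc

section Core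

variable {R : Type} [CommRing R] [IsDomain R]
  {q : Ideal R} [hq : q.IsPrime]
  {M : Type} [AddCommGroup M] [Module R M]

local notation "A" => Localization.AtPrime q
local notation "Γ" => LinearMap.ker (LocalizedModule.mkLinearMap q.primeCompl M)
local notation "jmap" => Algebra.linearMap R (Localization.AtPrime q)

theorem tmul_factor {p : Ideal R} {a y c : R} (ha : a ∈ p) (hy : y ∈ p) (h : a = y * c)
    (m : M) :
    ((⟨jmap a, Submodule.mem_map_of_mem ha⟩ : Submodule.map jmap p) ⊗ₜ[R] m) =
      (⟨jmap y, Submodule.mem_map_of_mem hy⟩ : Submodule.map jmap p) ⊗ₜ[R] (c • m) := by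
  have : (⟨jmap a, Submodule.mem_map_of_mem ha⟩ : Submodule.map jmap p) =
      c • ⟨jmap y, Submodule.mem_map_of_mem hy⟩ := by
    apply Subtype.ext
    simp [h, mul_comm, Algebra.smul_def]
  rw [this, smul_tmul]

theorem core_tmul_eq_zero (hchain : ∀ I J : Ideal R, I ≤ J ∨ J ≤ I)
    {p : Ideal R} (hqp : q < p) (hidem : p * p = p)
    (hpΓ : p • Γ = ⊥) {a : R} (ha : a ∈ p) {m : M} (him : a • m ∈ Γ) :
    ((⟨jmap a, Submodule.mem_map_of_mem ha⟩ : Submodule.map jmap p) ⊗ₜ[R] m) = 0 := by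
  obtain ⟨t, htp, htq⟩ := SetLike.exists_of_lt hqp
  have smul_zero_of : ∀ {b : R}, b ∈ p → ∀ {x : M}, x ∈ Γ → b • x = 0 := by
    intro b hb x hx
    have : b • x ∈ p • Γ := Submodule.smul_mem_smul hb hx
    rw [hpΓ] at this
    simpa using this
  rcases dvd_total' hchain t a with ⟨c, hc⟩ | ⟨d, hd⟩
  · -- a = t * c
    have hcm : c • m ∈ Γ := by
      apply torsion_of_smul_torsion q M htq
      rw [smul_smul, ← hc]; exact him
    obtain ⟨t₁, ht₁, t₂, ht₂, ht⟩ := factor2' hchain hidem htp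
    have : a = t₁ * (t₂ * c) := by rw [hc, ht]; ring
    rw [tmul_factor ha ht₁ this m, mul_smul, smul_zero_of ht₂ hcm, tmul_zero]
  · -- t = a * d, so a ∉ q
    have haq : a ∉ q := fun h => htq (hd ▸ q.mul_mem_right d h)
    have hm : m ∈ Γ := torsion_of_smul_torsion q M haq him
    obtain ⟨a₁, ha₁, a₂, ha₂, haa⟩ := factor2' hchain hidem ha
    rw [tmul_factor ha ha₁ haa m, smul_zero_of ha₂ hm, tmul_zero]

theorem ker_triv (hchain : ∀ I J : Ideal R, I ≤ J ∨ J ≤ I)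
    {p : Ideal R} (hqp : q < p) (hidem : p * p = p)
    (hpΓ : p • Γ = ⊥) (z : (Submodule.map jmap p) ⊗[R] M)
    (hz : LinearMap.rTensor M (Submodule.map jmap p).subtype z = 0) : z = 0 := by
  obtain ⟨t, htp, htq⟩ := SetLike.exists_of_lt hqp
  obtain ⟨a, ha, m, rfl⟩ := pure_tensor' hchain ⟨t, htp⟩ M z
  rw [LinearMap.rTensor_tmul] at hz
  have him : a • m ∈ Γ := (jtmul_eq_zero_iff q M a m).1 hz
  exact core_tmul_eq_zero hchain hqp hidem hpΓ ha him

end Core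

section Key

variable {R : Type} [CommRing R]

-- naturality square for lTensor/rTensor, pointwise
theorem comm_sq {X Y Q Q' : Type} [AddCommGroup X] [Module R X] [AddCommGroup Y] [Module R Y]
    [AddCommGroup Q] [Module R Q] [AddCommGroup Q'] [Module R Q']
    (g : X →ₗ[R] Y) (f : Q →ₗ[R] Q') (z : X ⊗[R] Q) :
    LinearMap.rTensor Q' g (LinearMap.lTensor X f z) =
      LinearMap.lTensor Y f (LinearMap.rTensor Q g z) := by
  induction z with
  | zero => simp
  | tmul x m => simp
  | add a b iha ihb => simp [map_add, iha, ihb]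

-- contraction helper
noncomputable def contract {S W P₀ : Type} [AddCommGroup S] [Module R S] [AddCommGroup W]
    [Module R W] [AddCommGroup P₀] [Module R P₀] (σ : S →ₗ[R] R) (π : P₀ →ₗ[R] W) :
    S ⊗[R] P₀ →ₗ[R] W :=
  TensorProduct.lift (((LinearMap.lsmul R W).comp σ).compl₂ π)

theorem contract_tmul {S W P₀ : Type} [AddCommGroup S] [Module R S] [AddCommGroup W]
    [Module R W] [AddCommGroup P₀] [Module R P₀] (σ : S →ₗ[R] R) (π : P₀ →ₗ[R] W)
    (x : S) (y : P₀) : contract σ π (x ⊗ₜ[R] y) = σ x • π y := by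
  rw [contract, TensorProduct.lift.tmul, LinearMap.compl₂_apply, LinearMap.comp_apply,
    LinearMap.lsmul_apply]

theorem contract_lTensor_zero {S W P₁ P₀ : Type} [AddCommGroup S] [Module R S] [AddCommGroup W]
    [Module R W] [AddCommGroup P₁] [Module R P₁] [AddCommGroup P₀] [Module R P₀]
    (σ : S →ₗ[R] R) (π : P₀ →ₗ[R] W) (d₁ : P₁ →ₗ[R] P₀) (h : ∀ y, π (d₁ y) = 0)
    (v : S ⊗[R] P₁) : contract σ π (LinearMap.lTensor S d₁ v) = 0 := by
  induction v with
  | zero => simp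
  | tmul x y => rw [LinearMap.lTensor_tmul, contract_tmul, h, smul_zero]
  | add v₁ v₂ ih₁ ih₂ => rw [map_add, map_add, ih₁, ih₂, add_zero]

end Key

section Main

variable {R : Type} [CommRing R] [IsDomain R]
  {q : Ideal R} [hq : q.IsPrime]
  {M : Type} [AddCommGroup M] [Module R M]

local notation "A" => Localization.AtPrime q
local notation "Γ" => LinearMap.ker (LocalizedModule.mkLinearMap q.primeCompl M)
local notation "jmap" => Algebra.linearMap R (Localization.AtPrime q)

set_option maxHeartbeats 2000000 in
theorem key_iff (hchain : ∀ I J : Ideal R, I ≤ J ∨ J ≤ I)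
    {p : Ideal R} (hqp : q < p) (hidem : p * p = p)
    {P₂ P₁ P₀ : Type} [AddCommGroup P₂] [Module R P₂] [AddCommGroup P₁] [Module R P₁]
    [AddCommGroup P₀] [Module R P₀] [Module.Flat R P₀]
    (d₂ : P₂ →ₗ[R] P₁) (d₁ : P₁ →ₗ[R] P₀) (π : P₀ →ₗ[R] M)
    (hd : Function.Exact d₂ d₁) (hd₁ : Function.Exact d₁ π) (hπ : Function.Surjective π) :
    (∀ z : (A ⧸ (Submodule.map jmap p)) ⊗[R] P₁,
        LinearMap.lTensor _ d₁ z = 0 → ∃ y, LinearMap.lTensor _ d₂ y = z) ↔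
      p • Γ = ⊥ := by
  set pb : Submodule R A := Submodule.map jmap p with hpb
  set N := A ⧸ pb with hN
  have hinj : Function.Injective (jmap : R →ₗ[R] A) := by
    have : q.primeCompl ≤ nonZeroDivisors R := by
      intro x hx
      exact mem_nonZeroDivisors_of_ne_zero (fun h => hx (h ▸ q.zero_mem))
    exact IsLocalization.injective A this
  have hAflat : Module.Flat R A := inferInstance
  -- column exactness
  have colexact : ∀ (Q : Type) [AddCommGroup Q] [Module R Q],
      Function.Exact (LinearMap.rTensor Q pb.subtype) (LinearMap.rTensor Q pb.mkQ) := by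
    intro Q _ _
    exact rTensor_exact Q (LinearMap.exact_subtype_mkQ pb) (Submodule.mkQ_surjective pb)
  have hρsurj : Function.Surjective pb.mkQ := Submodule.mkQ_surjective pb
  have hρι : pb.mkQ.comp pb.subtype = 0 := by
    ext x; simp
  constructor
  · -- exactness → p • Γ = ⊥
    intro hexact
    rw [eq_bot_iff]
    rw [Submodule.smul_le]
    intro a ha m hm
    obtain ⟨x₀, hx₀⟩ := hπ m
    set w : pb ⊗[R] P₀ := (⟨jmap a, Submodule.mem_map_of_mem ha⟩ : pb) ⊗ₜ[R] x₀ with hw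
    set w' : A ⊗[R] P₀ := (jmap a) ⊗ₜ[R] x₀ with hw'
    have hww' : LinearMap.rTensor P₀ pb.subtype w = w' := by
      rw [hw, hw', LinearMap.rTensor_tmul]; rfl
    have hw'0 : LinearMap.lTensor A π w' = 0 := by
      rw [hw', LinearMap.lTensor_tmul, hx₀]
      exact (jtmul_eq_zero_iff q M a m).2 (Submodule.smul_mem _ a hm)
    -- w' is in the image of lTensor A d₁
    obtain ⟨u, hu⟩ := (Module.Flat.lTensor_exact A hd₁ w').1 hw'0
    -- z := image of u in N ⊗ P₁ is killed by lTensor N d₁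
    set z : N ⊗[R] P₁ := LinearMap.rTensor P₁ pb.mkQ u with hz
    have hzker : LinearMap.lTensor N d₁ z = 0 := by
      rw [hz, ← comm_sq, hu, ← hww', ← LinearMap.comp_apply, ← LinearMap.rTensor_comp, hρι,
        LinearMap.rTensor_zero, LinearMap.zero_apply]
    obtain ⟨z₂, hz₂⟩ := hexact z hzker
    obtain ⟨y, hy⟩ := LinearMap.rTensor_surjective P₂ hρsurj z₂
    have hker : LinearMap.rTensor P₁ pb.mkQ (u - LinearMap.lTensor A d₂ y) = 0 := by
      rw [map_sub, ← hz, comm_sq, hy, hz₂, sub_self]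
    obtain ⟨v, hv⟩ := (colexact P₁ (u - LinearMap.lTensor A d₂ y)).1 hker
    have hvw : LinearMap.rTensor P₀ pb.subtype (LinearMap.lTensor pb d₁ v) = w' := by
      rw [comm_sq, hv, map_sub, hu]
      have : LinearMap.lTensor A d₁ (LinearMap.lTensor A d₂ y) = 0 := by
        rw [← LinearMap.comp_apply, ← LinearMap.lTensor_comp,
          hd.linearMap_comp_eq_zero, LinearMap.lTensor_zero, LinearMap.zero_apply]
      rw [this, sub_zero]
    -- by flatness of P₀, lTensor pb d₁ v = w
    have hinjP₀ : Function.Injective (LinearMap.rTensor P₀ pb.subtype) :=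
      Module.Flat.rTensor_preserves_injective_linearMap pb.subtype pb.injective_subtype
    have hveq : LinearMap.lTensor pb d₁ v = w := hinjP₀ (by rw [hvw, hww'])
    -- contraction map φ : pb ⊗ P₀ → M
    set σ : pb →ₗ[R] R :=
      p.subtype.comp (Submodule.equivMapOfInjective (Algebra.linearMap R A) hinj p).symm.toLinearMap with hσ
    have hσa : σ (⟨jmap a, Submodule.mem_map_of_mem ha⟩ : pb) = a := by
      have h1 : (Submodule.equivMapOfInjective (Algebra.linearMap R A) hinj p).symm
          (⟨jmap a, Submodule.mem_map_of_mem ha⟩ : pb) = ⟨a, ha⟩ := by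
        apply (Submodule.equivMapOfInjective (Algebra.linearMap R A) hinj p).injective
        rw [LinearEquiv.apply_symm_apply]
        exact Subtype.ext (Submodule.coe_equivMapOfInjective_apply (Algebra.linearMap R A) hinj p ⟨a, ha⟩).symm
      rw [hσ, LinearMap.comp_apply, LinearEquiv.coe_toLinearMap, h1, Submodule.subtype_apply]
    have hc0 : contract σ π (LinearMap.lTensor pb d₁ v) = 0 :=
      contract_lTensor_zero σ π d₁ (fun y => hd₁.apply_apply_eq_zero y) v
    rw [hveq, hw, contract_tmul, hσa, hx₀] at hc0
    exact hc0
  · -- p • Γ = ⊥ → exactness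
    intro hpΓ z hz
    obtain ⟨u, hu⟩ := LinearMap.rTensor_surjective P₁ hρsurj z
    set w : A ⊗[R] P₀ := LinearMap.lTensor A d₁ u with hw
    have hw0 : LinearMap.rTensor P₀ pb.mkQ w = 0 := by
      rw [hw, comm_sq, hu, hz]
    obtain ⟨t, ht⟩ := (colexact P₀ w).1 hw0
    have he0 : LinearMap.rTensor M pb.subtype (LinearMap.lTensor pb π t) = 0 := by
      rw [comm_sq, ht, hw, ← LinearMap.comp_apply, ← LinearMap.lTensor_comp,
        hd₁.linearMap_comp_eq_zero, LinearMap.lTensor_zero, LinearMap.zero_apply]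
    have he : LinearMap.lTensor pb π t = 0 :=
      ker_triv hchain hqp hidem hpΓ _ he0
    obtain ⟨v, hv⟩ := ((lTensor_exact pb hd₁ hπ) t).1 he
    have huv : LinearMap.lTensor A d₁ (u - LinearMap.rTensor P₁ pb.subtype v) = 0 := by
      rw [map_sub, ← hw, ← comm_sq, hv, ht, sub_self]
    obtain ⟨y, hy⟩ := (Module.Flat.lTensor_exact A hd (u - LinearMap.rTensor P₁ pb.subtype v)).1 huv
    refine ⟨LinearMap.rTensor P₂ pb.mkQ y, ?_⟩
    rw [← comm_sq, hy, map_sub, hu]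
    have : LinearMap.rTensor P₁ pb.mkQ (LinearMap.rTensor P₁ pb.subtype v) = 0 := by
      rw [← LinearMap.comp_apply, ← LinearMap.rTensor_comp, hρι, LinearMap.rTensor_zero,
        LinearMap.zero_apply]
    rw [this, sub_zero]

end Main

section Cat

open CategoryTheory.Limits CategoryTheory.MonoidalCategory

set_option maxHeartbeats 2000000 in
/-- Over a valuation domain with primes `q ⊊ p`, `p` idempotent:
`Tor₁ᴿ(R_q/p, M) = 0` iff `p · Γ_q(M) = 0`, where `Γ_q(M)` is the kernel of the
localization map `M → M_q` and `R_q/p` is the quotient of the localization `R_q`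
by the (image of the) ideal `p`. -/
theorem tor_one_vanishes_iff_smul_torsion_eq_bot
    {R : Type} [CommRing R] [IsDomain R]
    (hchain : ∀ I J : Ideal R, I ≤ J ∨ J ≤ I)
    (q p : Ideal R) (hq : q.IsPrime) (hp : p.IsPrime) (hqp : q < p)
    (hidem : p * p = p)
    (M : Type) [AddCommGroup M] [Module R M] :
    Limits.IsZero
      (((Tor (ModuleCat R) 1).obj
          (ModuleCat.of R ((Localization.AtPrime q) ⧸
            Submodule.map (Algebra.linearMap R (Localization.AtPrime q)) p))).obj
        (ModuleCat.of R M)) ↔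
      p • LinearMap.ker (LocalizedModule.mkLinearMap q.primeCompl M) = ⊥ := by
  set Mc : ModuleCat R := ModuleCat.of R M with hMc
  set Nc : ModuleCat R := ModuleCat.of R ((Localization.AtPrime q) ⧸
      Submodule.map (Algebra.linearMap R (Localization.AtPrime q)) p) with hNc
  set F : ModuleCat R ⥤ ModuleCat R := (tensoringLeft (ModuleCat R)).obj Nc with hF
  let P : ProjectiveResolution Mc := (HasProjectiveResolution.out (Z := Mc)).some
  have e1 : (((Tor (ModuleCat R) 1).obj Nc).obj Mc) ≅
      (HomologicalComplex.homologyFunctor (ModuleCat R) _ 1).obj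
        ((F.mapHomologicalComplex _).obj P.complex) :=
    P.isoLeftDerivedObj F 1
  rw [e1.isZero_iff]
  set K : HomologicalComplex (ModuleCat R) (ComplexShape.down ℕ) :=
    (F.mapHomologicalComplex _).obj P.complex with hK
  have e2 : IsZero ((HomologicalComplex.homologyFunctor (ModuleCat R) _ 1).obj K) ↔
      K.ExactAt 1 := (K.exactAt_iff_isZero_homology 1).symm
  rw [e2]
  rw [K.exactAt_iff' 2 1 0 (by simp) (by simp)]
  rw [ShortComplex.moduleCat_exact_iff]
  have hπepi : Function.Surjective (P.π.f 0) := by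
    have hco := (ShortComplex.exact_and_epi_g_iff_g_is_cokernel
      (S := ShortComplex.mk (P.complex.d 1 0) (P.π.f 0) P.complex_d_comp_π_f_zero)).2
      ⟨P.isColimitCokernelCofork⟩
    have := hco.2
    rwa [ModuleCat.epi_iff_surjective] at this
  have hd : Function.Exact (P.complex.d 2 1).hom (P.complex.d 1 0).hom := by
    have := (ShortComplex.moduleCat_exact_iff_range_eq_ker _).1 (P.exact_succ 0)
    exact LinearMap.exact_iff.2 this.symm
  have hd₁ : Function.Exact (P.complex.d 1 0).hom (P.π.f 0).hom := by
    have := (ShortComplex.moduleCat_exact_iff_range_eq_ker _).1 P.exact₀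
    exact LinearMap.exact_iff.2 this.symm
  have hflat : Module.Flat R ↑(P.complex.X 0) := by
    have hproj : Projective (ModuleCat.of R ↑(P.complex.X 0)) := by
      rw [ModuleCat.of_coe]; infer_instance
    have := (IsProjective.iff_projective (R := R) (P := ↑(P.complex.X 0))).2 hproj
    infer_instance
  exact key_iff hchain hqp hidem (P.complex.d 2 1).hom (P.complex.d 1 0).hom
    ((P.π.f 0).hom : ↑(P.complex.X 0) →ₗ[R] M) hd hd₁ hπepi

end Cat
end

section
/- Let R be a valuation domain with quotient field Q, and let p ⊆ p' ⊊ p'' be prime ideals of R. Then the module R_p/R_{p'} (the quotient of the localization R_p by the localization R_{p'}, both viewed as R-submodules of Q) is isomorphic to a direct limit of copies of R_p/p''. -/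
/-- Data exhibiting a module `T` as a direct limit of copies of a module `C`:
a directed system of copies of `C` together with a colimit cocone into `T`. -/
structure DirectLimitPresentation (R : Type) [CommRing R]
    (C : Type) [AddCommGroup C] [Module R C]
    (T : Type) [AddCommGroup T] [Module R T] where
  ι : Type
  [pre : Preorder ι]
  directed : IsDirected ι (· ≤ ·)
  nonempty : Nonempty ι
  f : ∀ i j : ι, i ≤ j → C →ₗ[R] C
  map_self : ∀ (i : ι) (h : i ≤ i) (x : C), f i i h x = x
  map_map : ∀ (i j k : ι) (hij : i ≤ j) (hjk : j ≤ k) (x : C),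
    f j k hjk (f i j hij x) = f i k (hij.trans hjk) x
  g : ι → (C →ₗ[R] T)
  compat : ∀ (i j : ι) (h : i ≤ j), (g j).comp (f i j h) = g i
  jointly_surjective : ∀ t : T, ∃ (i : ι) (x : C), g i x = t
  eq_zero : ∀ (i : ι) (x : C), g i x = 0 → ∃ (j : ι) (h : i ≤ j), f i j h x = 0

section Aux

variable {R : Type} [CommRing R] [IsDomain R]

/-- Index type: the complement of a prime ideal, to be ordered by divisibility. -/
def DLIdx (p' : Ideal R) [p'.IsPrime] : Type := {s : R // s ∈ p'.primeCompl}

instance DLIdx.pre (p' : Ideal R) [p'.IsPrime] : Preorder (DLIdx p') where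
  le s t := ∃ r : R, (t.1 : R) = s.1 * r
  le_refl s := ⟨1, (mul_one _).symm⟩
  le_trans a b c h1 h2 := by
    obtain ⟨r1, e1⟩ := h1
    obtain ⟨r2, e2⟩ := h2
    exact ⟨r1 * r2, by rw [e2, e1, mul_assoc]⟩

theorem DLIdx.ne_zero {p' : Ideal R} [p'.IsPrime] (s : DLIdx p') : s.1 ≠ 0 :=
  fun h => s.2 (h ▸ p'.zero_mem)

theorem DLIdx.le_def {p' : Ideal R} [p'.IsPrime] {s t : DLIdx p'} :
    s ≤ t ↔ ∃ r : R, (t.1 : R) = s.1 * r := Iff.rfl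

end Aux

/-- Over a valuation domain with primes `p ⊆ p' ⊊ p''`, the module `R_p/R_{p'}` is
isomorphic to a direct limit of copies of `R_p/p''`. -/
theorem quotient_of_localizations_is_directLimit_of_copies
    {R : Type} [CommRing R] [IsDomain R]
    (hchain : ∀ I J : Ideal R, I ≤ J ∨ J ≤ I)
    (p p' p'' : Ideal R) (hp : p.IsPrime) (hp' : p'.IsPrime) (hp'' : p''.IsPrime)
    (h1 : p ≤ p') (h2 : p' < p'') :
    Nonempty (DirectLimitPresentation R
      ((Localization.AtPrime p) ⧸
        Submodule.map (Algebra.linearMap R (Localization.AtPrime p)) p'')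
      ((Localization.AtPrime p) ⧸
        Submodule.span R (Set.range
          (IsLocalization.map (M := p'.primeCompl) (T := p.primeCompl)
            (S := Localization.AtPrime p')
            (Localization.AtPrime p) (RingHom.id R)
            (by intro x hx; simp only [Submonoid.mem_comap, RingHom.id_apply]
                exact fun hmem => hx (h1 hmem)))))) := by
  classical
  -- notation
  set Rp := Localization.AtPrime p with hRp
  set Rp' := Localization.AtPrime p' with hRp'
  have hps : p'.primeCompl ≤ p.primeCompl := by
    intro x hx hmem; exact hx (h1 hmem)
  set φ := algebraMap R Rp with hφdef
  have hcomap : p'.primeCompl ≤ Submonoid.comap (RingHom.id R) p.primeCompl := by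
    intro x hx; simp only [Submonoid.mem_comap, RingHom.id_apply]
    exact fun hmem => hx (h1 hmem)
  set lm : Rp' →+* Rp :=
    IsLocalization.map (M := p'.primeCompl) (T := p.primeCompl)
      (S := Rp') Rp (RingHom.id R) hcomap with hlm
  set P : Submodule R Rp := Submodule.map (Algebra.linearMap R Rp) p'' with hP
  set N : Submodule R Rp := Submodule.span R (Set.range lm) with hN
  -- the localization map as an R-linear map
  let lmₗ : Rp' →ₗ[R] Rp :=
    { toFun := lm
      map_add' := by intro a b; exact map_add lm a b
      map_smul' := by
        intro r z
        simp only [RingHom.id_apply]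
        rw [Algebra.smul_def, Algebra.smul_def, map_mul]
        congr 1
        exact IsLocalization.map_eq hcomap r }
  have hNle : N ≤ LinearMap.range lmₗ := by
    rw [hN, Submodule.span_le]
    rintro _ ⟨y, rfl⟩
    exact ⟨y, rfl⟩
  -- the inverse of s in Rp
  have he1 : ∀ (s : R) (hs : s ∈ p.primeCompl),
      IsLocalization.mk' Rp (1 : R) (⟨s, hs⟩ : p.primeCompl) * φ s = 1 := by
    intro s hs
    have := IsLocalization.mk'_spec Rp (1 : R) (⟨s, hs⟩ : p.primeCompl)
    rwa [map_one] at this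
  -- the maps gs on Rp
  let gs : ∀ s : DLIdx p', Rp →ₗ[R] (Rp ⧸ N) := fun s =>
    (N.mkQ).comp (LinearMap.mulLeft R
      (IsLocalization.mk' Rp (1 : R) (⟨s.1, hps s.2⟩ : p.primeCompl)))
  have hker : ∀ s : DLIdx p', P ≤ LinearMap.ker (gs s) := by
    rintro s _ ⟨a, ha, rfl⟩
    simp only [gs, LinearMap.mem_ker, LinearMap.comp_apply, LinearMap.mulLeft_apply,
      Submodule.mkQ_apply, Submodule.Quotient.mk_eq_zero]
    have key : IsLocalization.mk' Rp (1 : R) (⟨s.1, hps s.2⟩ : p.primeCompl) *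
        (Algebra.linearMap R Rp) a = lm (IsLocalization.mk' Rp' a (⟨s.1, s.2⟩ : p'.primeCompl)) := by
      rw [IsLocalization.map_mk' (M := p'.primeCompl)]
      simp only [RingHom.id_apply, Algebra.linearMap_apply]
      rw [mul_comm]
      exact (IsLocalization.mk'_eq_mul_mk'_one a _).symm
    rw [key]
    exact Submodule.subset_span ⟨_, rfl⟩
  refine ⟨{
    ι := DLIdx p'
    pre := DLIdx.pre p'
    directed := ⟨fun s t => ⟨⟨s.1 * t.1, Submonoid.mul_mem _ s.2 t.2⟩,
      ⟨t.1, rfl⟩, ⟨s.1, mul_comm _ _⟩⟩⟩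
    nonempty := ⟨⟨1, p'.primeCompl.one_mem⟩⟩
    f := fun i j h => h.choose • LinearMap.id
    map_self := ?_
    map_map := ?_
    g := fun s => P.liftQ (gs s) (hker s)
    compat := ?_
    jointly_surjective := ?_
    eq_zero := ?_ }⟩
  · -- map_self
    intro i h x
    have hc : i.1 = i.1 * h.choose := h.choose_spec
    have : h.choose = 1 := by
      apply mul_left_cancel₀ (DLIdx.ne_zero i)
      rw [← hc, mul_one]
    simp [this]
  · -- map_map
    intro i j k hij hjk x
    have hcij : j.1 = i.1 * hij.choose := hij.choose_spec
    have hcjk : k.1 = j.1 * hjk.choose := hjk.choose_spec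
    have hcik : k.1 = i.1 * (hij.trans hjk).choose := (hij.trans hjk).choose_spec
    have : hij.choose * hjk.choose = (hij.trans hjk).choose := by
      apply mul_left_cancel₀ (DLIdx.ne_zero i)
      rw [← mul_assoc, ← hcij, ← hcjk, ← hcik]
    simp only [LinearMap.smul_apply, LinearMap.id_apply, ← this, smul_smul]
    rw [mul_comm]
  · -- compat
    intro i j h
    apply Submodule.linearMap_qext
    ext x
    have hc : j.1 = i.1 * h.choose := h.choose_spec
    have hr : h.choose ∈ p'.primeCompl := by
      intro hmem
      exact j.2 (hc ▸ p'.mul_mem_left _ hmem)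
    simp only [LinearMap.comp_apply, Submodule.mkQ_apply, LinearMap.smul_apply,
      LinearMap.id_apply, ← Submodule.Quotient.mk_smul, Submodule.liftQ_apply]
    show gs j (h.choose • x) = gs i x
    simp only [gs, LinearMap.comp_apply, LinearMap.mulLeft_apply, Submodule.mkQ_apply]
    congr 1
    rw [Algebra.smul_def, ← mul_assoc]
    congr 1
    -- mk' 1 (i * r) * φ r = mk' 1 i
    rw [mul_comm, ← IsLocalization.mk'_eq_mul_mk'_one]
    have : (⟨j.1, hps j.2⟩ : p.primeCompl) =
        (⟨i.1, hps i.2⟩ : p.primeCompl) * ⟨h.choose, hps hr⟩ := by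
      ext; exact hc
    rw [this]
    have := IsLocalization.mk'_cancel (S := Rp) (1 : R)
      (⟨i.1, hps i.2⟩ : p.primeCompl) (⟨h.choose, hps hr⟩ : p.primeCompl)
    rw [one_mul] at this
    exact this
  · -- jointly_surjective
    intro t
    obtain ⟨y, rfl⟩ := N.mkQ_surjective t
    refine ⟨⟨1, p'.primeCompl.one_mem⟩, P.mkQ y, ?_⟩
    simp only [Submodule.mkQ_apply, Submodule.liftQ_apply]
    show gs _ y = _
    simp only [gs, LinearMap.comp_apply, LinearMap.mulLeft_apply, Submodule.mkQ_apply]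
    congr 1
    rw [IsLocalization.mk'_self Rp (p.primeCompl.one_mem), one_mul]
  · -- eq_zero
    intro i x hx
    obtain ⟨x, rfl⟩ := P.mkQ_surjective x
    rw [Submodule.mkQ_apply, Submodule.liftQ_apply] at hx
    have hmem : IsLocalization.mk' Rp (1 : R) (⟨i.1, hps i.2⟩ : p.primeCompl) * x ∈ N := by
      simpa only [gs, LinearMap.comp_apply, LinearMap.mulLeft_apply, Submodule.mkQ_apply,
        Submodule.Quotient.mk_eq_zero] using hx
    obtain ⟨y, hy⟩ := hNle hmem
    obtain ⟨⟨b, u⟩, rfl⟩ := IsLocalization.mk'_surjective p'.primeCompl y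
    -- x = φ i * mk' b u  in Rp
    have hxval : x = φ i.1 * IsLocalization.mk' Rp b (⟨u.1, hps u.2⟩ : p.primeCompl) := by
      have hlmy : lmₗ (IsLocalization.mk' Rp' b u) =
          IsLocalization.mk' Rp b (⟨u.1, hps u.2⟩ : p.primeCompl) := by
        show lm _ = _
        rw [IsLocalization.map_mk' (M := p'.primeCompl)]
        rfl
      rw [hlmy] at hy
      calc x = (IsLocalization.mk' Rp (1 : R) (⟨i.1, hps i.2⟩ : p.primeCompl) * φ i.1) * x := by
              rw [he1 i.1 (hps i.2), one_mul]
        _ = φ i.1 * (IsLocalization.mk' Rp (1 : R) (⟨i.1, hps i.2⟩ : p.primeCompl) * x) := by ring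
        _ = φ i.1 * IsLocalization.mk' Rp b (⟨u.1, hps u.2⟩ : p.primeCompl) := by rw [hy]
    obtain ⟨d, hd'', hd'⟩ := SetLike.exists_of_lt h2
    have hud : u.1 * d ∈ p'.primeCompl ∧ i.1 * (u.1 * d) ∈ p'.primeCompl := by
      constructor
      · intro hm
        rcases hp'.mem_or_mem hm with h | h
        · exact u.2 h
        · exact hd' h
      · intro hm
        rcases hp'.mem_or_mem hm with h | h
        · exact i.2 h
        · rcases hp'.mem_or_mem h with h | h
          · exact u.2 h
          · exact hd' h
    refine ⟨⟨i.1 * (u.1 * d), hud.2⟩, ⟨u.1 * d, rfl⟩, ?_⟩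
    -- the chosen witness equals u * d
    set h : i ≤ ⟨i.1 * (u.1 * d), hud.2⟩ := ⟨u.1 * d, rfl⟩ with hh
    have hc : i.1 * (u.1 * d) = i.1 * h.choose := h.choose_spec
    have hcv : h.choose = u.1 * d := by
      apply mul_left_cancel₀ (DLIdx.ne_zero i)
      rw [← hc]
    simp only [LinearMap.smul_apply, LinearMap.id_apply, ← Submodule.Quotient.mk_smul,
      Submodule.mkQ_apply, Submodule.Quotient.mk_eq_zero, hcv]
    -- (u*d) • x = φ (i*d*b) ∈ P
    have : (u.1 * d) • x = (Algebra.linearMap R Rp) (d * (i.1 * b)) := by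
      rw [hxval, Algebra.smul_def, Algebra.linearMap_apply]
      have hspec : φ u.1 * IsLocalization.mk' Rp b (⟨u.1, hps u.2⟩ : p.primeCompl) = φ b :=
        IsLocalization.mk'_spec' Rp b (⟨u.1, hps u.2⟩ : p.primeCompl)
      calc φ (u.1 * d) * (φ i.1 * IsLocalization.mk' Rp b (⟨u.1, hps u.2⟩ : p.primeCompl))
          = φ d * φ i.1 * (φ u.1 * IsLocalization.mk' Rp b (⟨u.1, hps u.2⟩ : p.primeCompl)) := by
            rw [map_mul]; ring
        _ = φ d * φ i.1 * φ b := by rw [hspec]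
        _ = φ (d * (i.1 * b)) := by rw [map_mul, map_mul, mul_assoc]
    rw [this]
    exact ⟨d * (i.1 * b), p''.mul_mem_right _ hd'', rfl⟩
end

section
/- Let R be a valuation domain and q a prime ideal. Let M be an R-module and J an ideal of R with q ⊊ J. Then the torsion-free quotient F_q(M) = im(M → M ⊗_R R_q) is q-divisible (i.e., an R_q-module) if and only if (R_q/J) ⊗_R M = 0. -/
/-- Over a valuation domain, for a prime `q`, an ideal `J` with `q ⊊ J`, and a module `M`:
the torsion-free quotient `F_q(M) = im(M → M_q)` is `q`-divisible (i.e. an `R_q`-module)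
if and only if `(R_q/J) ⊗_R M = 0`. -/
theorem torsionFreeQuotient_divisible_iff_tensor_vanishes
    {R : Type} [CommRing R] [IsDomain R]
    (hchain : ∀ I J : Ideal R, I ≤ J ∨ J ≤ I)
    (q : Ideal R) (hq : q.IsPrime) (J : Ideal R) (hqJ : q < J)
    (M : Type) [AddCommGroup M] [Module R M] :
    (∀ s : R, s ∉ q →
      ∀ y ∈ LinearMap.range (LocalizedModule.mkLinearMap q.primeCompl M),
        ∃ z ∈ LinearMap.range (LocalizedModule.mkLinearMap q.primeCompl M), s • z = y) ↔
    Subsingleton (TensorProduct R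
      ((Localization.AtPrime q) ⧸
        Submodule.map (Algebra.linearMap R (Localization.AtPrime q)) J) M) := by
  classical
  obtain ⟨t, htJ, htq⟩ := SetLike.exists_of_lt hqJ
  set Rq := Localization.AtPrime q with hRq
  set f := LocalizedModule.mkLinearMap q.primeCompl M with hf
  set F := LinearMap.range f with hF
  set JJ := Submodule.map (Algebra.linearMap R Rq) J with hJJ
  -- Both sides are equivalent to surjectivity of `f : M → M_q`.
  have key : (∀ s : R, s ∉ q → ∀ y ∈ F, ∃ z ∈ F, s • z = y) ↔
      ∀ x : LocalizedModule q.primeCompl M, x ∈ F := by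
    constructor
    · intro hdiv x
      induction x using LocalizedModule.induction_on with
      | h m s =>
        obtain ⟨z, ⟨m', rfl⟩, hsz⟩ := hdiv s s.2 (f m) ⟨m, rfl⟩
        have h1 : (s : R) • LocalizedModule.mk m' 1 = LocalizedModule.mk m 1 := hsz
        rw [LocalizedModule.smul'_mk, LocalizedModule.mk_eq] at h1
        obtain ⟨u, hu⟩ := h1
        refine ⟨m', ?_⟩
        show LocalizedModule.mk m' 1 = LocalizedModule.mk m s
        rw [LocalizedModule.mk_eq]
        refine ⟨u, ?_⟩
        simpa [Submonoid.smul_def] using hu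
    · intro hsurj s hs y hy
      obtain ⟨m, rfl⟩ := hy
      obtain ⟨m', hm'⟩ := hsurj (LocalizedModule.mk m ⟨s, hs⟩)
      refine ⟨f m', ⟨m', rfl⟩, ?_⟩
      have h1 : LocalizedModule.mk m' 1 = LocalizedModule.mk m ⟨s, hs⟩ := hm'
      rw [LocalizedModule.mk_eq] at h1
      obtain ⟨u, hu⟩ := h1
      show (s : R) • LocalizedModule.mk m' 1 = LocalizedModule.mk m 1
      rw [LocalizedModule.smul'_mk, LocalizedModule.mk_eq]
      refine ⟨u, ?_⟩
      simpa [Submonoid.smul_def] using hu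
  rw [key]
  constructor
  · -- surjectivity → subsingleton
    intro hsurj
    refine subsingleton_of_forall_eq 0 fun z => ?_
    induction z using TensorProduct.induction_on with
    | zero => rfl
    | add a b ha hb => rw [ha, hb, add_zero]
    | tmul c m =>
      obtain ⟨x, rfl⟩ := Submodule.Quotient.mk_surjective _ c
      obtain ⟨⟨r, s⟩, rfl⟩ := IsLocalization.mk'_surjective q.primeCompl x
      obtain ⟨m', hm'⟩ := hsurj (LocalizedModule.mk m (s * ⟨t, htq⟩))
      have h1 : LocalizedModule.mk m' 1 = LocalizedModule.mk m (s * ⟨t, htq⟩) := hm'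
      rw [LocalizedModule.mk_eq] at h1
      obtain ⟨u, hu⟩ := h1
      have hu' : ((u : R) * ((s : R) * t)) • m' = (u : R) • m := by
        simpa [Submonoid.smul_def, mul_smul] using hu
      set y : Rq := IsLocalization.mk' Rq (1 : R) (u * s) with hy
      have c1 : IsLocalization.mk' Rq r s = ((u : R) * r) • y := by
        rw [hy, IsLocalization.smul_mk', mul_one]
        rw [show (u * s : q.primeCompl) = s * u from mul_comm u s,
          show ((u : R) * r) = r * (u : R) by ring]
        exact (IsLocalization.mk'_cancel r s u).symm
      have c2 : (r * ((u : R) * ((s : R) * t))) • y = algebraMap R Rq (r * t) := by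
        rw [hy, IsLocalization.smul_mk', mul_one]
        have hc := IsLocalization.mk'_cancel (S := Rq) (r * t) 1 (u * s)
        rw [one_mul] at hc
        rw [show (r * ((u : R) * ((s : R) * t))) = (r * t) * ((u * s : q.primeCompl) : R) by
          push_cast; ring]
        rw [hc, IsLocalization.mk'_one]
      have hmm : ((u : R) * r) • m = (r * ((u : R) * ((s : R) * t))) • m' := by
        rw [mul_comm (u : R) r, mul_smul, mul_smul, hu']
      calc (Submodule.Quotient.mk (IsLocalization.mk' Rq r s) : Rq ⧸ JJ) ⊗ₜ[R] m
          = (Submodule.Quotient.mk (((u : R) * r) • y) : Rq ⧸ JJ) ⊗ₜ[R] m := by rw [← c1]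
        _ = (((u : R) * r) • (Submodule.Quotient.mk y : Rq ⧸ JJ)) ⊗ₜ[R] m := by
            rw [Submodule.Quotient.mk_smul]
        _ = (Submodule.Quotient.mk y : Rq ⧸ JJ) ⊗ₜ[R] (((u : R) * r) • m) := by
            rw [TensorProduct.smul_tmul]
        _ = (Submodule.Quotient.mk y : Rq ⧸ JJ) ⊗ₜ[R] ((r * ((u : R) * ((s : R) * t))) • m') := by
            rw [hmm]
        _ = ((r * ((u : R) * ((s : R) * t))) • (Submodule.Quotient.mk y : Rq ⧸ JJ)) ⊗ₜ[R] m' := by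
            rw [TensorProduct.smul_tmul]
        _ = (Submodule.Quotient.mk ((r * ((u : R) * ((s : R) * t))) • y) : Rq ⧸ JJ) ⊗ₜ[R] m' := by
            rw [Submodule.Quotient.mk_smul]
        _ = (Submodule.Quotient.mk (algebraMap R Rq (r * t)) : Rq ⧸ JJ) ⊗ₜ[R] m' := by rw [c2]
        _ = (0 : Rq ⧸ JJ) ⊗ₜ[R] m' := by
            have hz : (Submodule.Quotient.mk (algebraMap R Rq (r * t)) : Rq ⧸ JJ) = 0 :=
              (Submodule.Quotient.mk_eq_zero JJ).mpr ⟨r * t, J.mul_mem_left r htJ, rfl⟩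
            rw [hz]
        _ = 0 := TensorProduct.zero_tmul _ _
  · -- subsingleton → surjectivity
    intro hsub x
    have hcomm : ∀ (c : R) (a : Rq) (v : LocalizedModule q.primeCompl M),
        a • c • v = c • a • v := by
      intro c a v
      conv_lhs => rw [← algebraMap_smul Rq c v]
      rw [← mul_smul, mul_comm, mul_smul, algebraMap_smul]
    let β : Rq →ₗ[R] M →ₗ[R] (LocalizedModule q.primeCompl M ⧸ F) :=
      LinearMap.mk₂ R (fun a m => F.mkQ (a • f m))
        (fun a b m => by simp only [add_smul, map_add])
        (fun c a m => by simp only [smul_assoc, map_smul])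
        (fun a m m' => by simp only [map_add, smul_add])
        (fun c a m => by simp only [map_smul, hcomm])
    have hker : JJ ≤ LinearMap.ker β := by
      rintro a ⟨j, hj, rfl⟩
      rw [LinearMap.mem_ker]
      ext m
      show F.mkQ ((Algebra.linearMap R Rq j) • f m) = 0
      rw [Algebra.linearMap_apply, algebraMap_smul, ← map_smul, Submodule.mkQ_apply]
      exact (Submodule.Quotient.mk_eq_zero F).mpr ⟨j • m, rfl⟩
    let g := TensorProduct.lift (Submodule.liftQ JJ β hker)
    induction x using LocalizedModule.induction_on with
    | h m s =>
      have h0 : g ((Submodule.Quotient.mk (IsLocalization.mk' Rq (1 : R) s) : Rq ⧸ JJ)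
          ⊗ₜ[R] m) = 0 := by
        rw [Subsingleton.elim ((Submodule.Quotient.mk (IsLocalization.mk' Rq (1 : R) s) : Rq ⧸ JJ)
          ⊗ₜ[R] m) 0, map_zero]
      rw [TensorProduct.lift.tmul, Submodule.liftQ_apply] at h0
      have h1 : (β (IsLocalization.mk' Rq (1 : R) s)) m
          = F.mkQ (LocalizedModule.mk m s) := by
        show F.mkQ (IsLocalization.mk' Rq (1 : R) s • LocalizedModule.mk m 1) = _
        rw [← Localization.mk_eq_mk'_apply]
        erw [OreLocalization.oreDiv_smul_oreDiv]
        simp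
      rw [h1, Submodule.mkQ_apply] at h0
      exact (Submodule.Quotient.mk_eq_zero F).mp h0
end

section
/- Let R be a maximal valuation domain with maximal ideal m and quotient field Q. Then Q/m is an injective cogenerator of the category of R-modules. -/
/-- Let `R` be a maximal valuation domain (a valuation domain which is linearly compact
in the discrete topology: every finitely solvable system of congruences is solvable)
with maximal ideal `m` and quotient field `Q`. Then `Q/m` is an injective cogenerator
of `Mod-R`. -/
theorem quotientField_div_maximalIdeal_injective_cogenerator
    (R : Type) [CommRing R] [IsDomain R]
    (hchain : ∀ I J : Ideal R, I ≤ J ∨ J ≤ I)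
    (hmax : ∀ (ι : Type) (a : ι → R) (I : ι → Ideal R),
      (∀ s : Finset ι, ∃ x : R, ∀ i ∈ s, x - a i ∈ I i) →
      ∃ x : R, ∀ i, x - a i ∈ I i)
    (m : Ideal R) (hm : m.IsMaximal) :
    Module.Injective R
      ((FractionRing R) ⧸ Submodule.map (Algebra.linearMap R (FractionRing R)) m) ∧
    (∀ (M : Type) [AddCommGroup M] [Module R M], Nontrivial M →
      ∃ f : M →ₗ[R]
        ((FractionRing R) ⧸ Submodule.map (Algebra.linearMap R (FractionRing R)) m),
        f ≠ 0) := by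
  classical
  set Q := FractionRing R with hQdef
  set M : Submodule R Q := Submodule.map (Algebra.linearMap R Q) m with hMdef
  have hinj : Function.Injective (algebraMap R Q) := IsFractionRing.injective R Q
  have hne : ∀ r : R, r ≠ 0 → (algebraMap R Q r) ≠ 0 := by
    intro r hr h
    exact hr (hinj (by simpa using h))
  -- divisibility is total
  have htot : ∀ a b : R, a ∣ b ∨ b ∣ a := by
    intro a b
    rcases hchain (Ideal.span {a}) (Ideal.span {b}) with h | h
    · exact Or.inr (Ideal.span_singleton_le_span_singleton.mp h)
    · exact Or.inl (Ideal.span_singleton_le_span_singleton.mp h)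
  -- every nonempty finset has a common-divisor member
  have hmin : ∀ (s : Finset R), s.Nonempty → ∃ r ∈ s, ∀ x ∈ s, r ∣ x := by
    intro s
    induction s using Finset.induction_on with
    | empty => intro h; simp at h
    | @insert a s ha ih =>
      intro _
      by_cases hs : s.Nonempty
      · obtain ⟨r, hr, hdvd⟩ := ih hs
        rcases htot a r with h | h
        · refine ⟨a, Finset.mem_insert_self _ _, ?_⟩
          intro x hx
          rcases Finset.mem_insert.mp hx with rfl | hx
          · exact dvd_rfl
          · exact h.trans (hdvd x hx)
        · refine ⟨r, Finset.mem_insert_of_mem hr, ?_⟩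
          intro x hx
          rcases Finset.mem_insert.mp hx with rfl | hx
          · exact h
          · exact hdvd x hx
      · have hse : s = ∅ := Finset.not_nonempty_iff_eq_empty.mp hs
        subst hse
        exact ⟨a, by simp, by simp⟩
  -- membership in M
  have hMmem : ∀ z : Q, z ∈ M ↔ ∃ y ∈ m, algebraMap R Q y = z := by
    intro z
    simp [hMdef, Submodule.mem_map, Algebra.linearMap_apply]
  -- Baer's criterion
  have baer : Module.Baer R (Q ⧸ M) := by
    intro I f
    obtain ⟨q, hq⟩ : ∃ q : Q, ∀ (x : R) (hx : x ∈ I),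
        f ⟨x, hx⟩ = Submodule.Quotient.mk (x • q) := by
      by_cases hS : ∃ r ∈ I, r ≠ 0
      · obtain ⟨r0, hr0I, hr0⟩ := hS
        set ι := {r : R // r ∈ I ∧ r ≠ 0} with hιdef
        set i0 : ι := ⟨r0, hr0I, hr0⟩ with hi0def
        set c : Q := (algebraMap R Q r0)⁻¹ with hcdef
        -- choose representatives p i with mk (algebraMap i * p i) = f i
        have hpex : ∀ i : ι, ∃ p : Q,
            Submodule.Quotient.mk (algebraMap R Q i.1 * p) = f ⟨i.1, i.2.1⟩ := by
          intro i
          obtain ⟨y, hy⟩ := Submodule.mkQ_surjective M (f ⟨i.1, i.2.1⟩)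
          refine ⟨(algebraMap R Q i.1)⁻¹ * y, ?_⟩
          rw [← mul_assoc, mul_inv_cancel₀ (hne i.1 i.2.2), one_mul]
          exact hy
        choose p hp using hpex
        -- key compatibility
        have key : ∀ i j : ι, i.1 ∣ j.1 →
            algebraMap R Q j.1 * (p i - p j) ∈ M := by
          rintro i j ⟨t, ht⟩
          have h1 : Submodule.Quotient.mk (algebraMap R Q j.1 * p i)
              = f ⟨j.1, j.2.1⟩ := by
            have e1 : algebraMap R Q j.1 * p i = t • (algebraMap R Q i.1 * p i) := by
              rw [Algebra.smul_def, ht, map_mul]; ring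
            have e2 : (t • (⟨i.1, i.2.1⟩ : I)) = (⟨j.1, j.2.1⟩ : I) := by
              apply Subtype.ext
              simp [ht, mul_comm]
            rw [e1, Submodule.Quotient.mk_smul, hp i, ← map_smul, e2]
          rw [← Submodule.Quotient.mk_eq_zero, mul_sub, Submodule.Quotient.mk_sub,
            h1, hp j, sub_self]
        -- choose a i
        have haex : ∀ i : ι, ∃ a : R,
            algebraMap R Q i.1 * ((p i0 + c * algebraMap R Q a) - p i) ∈ M := by
          intro i
          obtain ⟨k, hki, hk0⟩ : ∃ k : ι, k.1 ∣ i.1 ∧ k.1 ∣ r0 := by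
            rcases htot i.1 r0 with h | h
            · exact ⟨i, dvd_rfl, h⟩
            · exact ⟨i0, h, dvd_rfl⟩
          have h2 := key k i0 hk0
          obtain ⟨y, hym, hy⟩ := (hMmem _).mp h2
          refine ⟨y, ?_⟩
          have e : p i0 + c * algebraMap R Q y = p k := by
            rw [hy, hcdef, ← mul_assoc, inv_mul_cancel₀ (hne r0 hr0), one_mul]
            ring
          rw [e]
          exact key k i hki
        choose a ha using haex
        -- the ideals
        set B : ι → Ideal R := fun i =>
          Submodule.comap (LinearMap.toSpanSingleton R Q (algebraMap R Q i.1 * c)) M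
          with hBdef
        have hBmem : ∀ (i : ι) (b : R),
            b ∈ B i ↔ algebraMap R Q b * (algebraMap R Q i.1 * c) ∈ M := by
          intro i b
          simp [hBdef, Submodule.mem_comap, LinearMap.toSpanSingleton_apply,
            Algebra.smul_def]
        -- finite solvability
        have hfin : ∀ s : Finset ι, ∃ x : R, ∀ i ∈ s, x - a i ∈ B i := by
          intro s
          obtain ⟨rs, hrs, hdvd⟩ := hmin ((insert i0 s).image (fun i => i.1))
            ⟨r0, by simp [hi0def]⟩
          obtain ⟨j, hj, hjval⟩ := Finset.mem_image.mp hrs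
          have hjdvd : ∀ i ∈ insert i0 s, j.1 ∣ i.1 := by
            intro i hi
            rw [hjval]
            exact hdvd i.1 (Finset.mem_image.mpr ⟨i, hi, rfl⟩)
          have hj0 := key j i0 (hjdvd i0 (Finset.mem_insert_self _ _))
          obtain ⟨y, hym, hy⟩ := (hMmem _).mp hj0
          have e : p i0 + c * algebraMap R Q y = p j := by
            rw [hy, hcdef, ← mul_assoc, inv_mul_cancel₀ (hne r0 hr0), one_mul]
            ring
          refine ⟨y, ?_⟩
          intro i hi
          rw [hBmem]
          have h1 : algebraMap R Q i.1 * ((p i0 + c * algebraMap R Q y) - p i) ∈ M := by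
            rw [e]; exact key j i (hjdvd i (Finset.mem_insert_of_mem hi))
          have h2 := ha i
          have e2 : algebraMap R Q (y - a i) * (algebraMap R Q i.1 * c)
              = algebraMap R Q i.1 * ((p i0 + c * algebraMap R Q y) - p i)
                - algebraMap R Q i.1 * ((p i0 + c * algebraMap R Q (a i)) - p i) := by
            rw [map_sub]; ring
          rw [e2]
          exact Submodule.sub_mem M h1 h2
        obtain ⟨x, hx⟩ := hmax ι a B hfin
        refine ⟨p i0 + c * algebraMap R Q x, ?_⟩
        intro r hr
        by_cases hr0' : r = 0
        · subst hr0'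
          have : ((⟨(0:R), hr⟩ : I)) = 0 := rfl
          rw [this, map_zero, zero_smul, Submodule.Quotient.mk_zero]
        · set i : ι := ⟨r, hr, hr0'⟩ with hidef
          have hbi := (hBmem i (x - a i)).mp (hx i)
          have hsum : algebraMap R Q i.1 * ((p i0 + c * algebraMap R Q x) - p i) ∈ M := by
            have e3 : algebraMap R Q i.1 * ((p i0 + c * algebraMap R Q x) - p i)
                = algebraMap R Q (x - a i) * (algebraMap R Q i.1 * c)
                  + algebraMap R Q i.1 * ((p i0 + c * algebraMap R Q (a i)) - p i) := by
              rw [map_sub]; ring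
            rw [e3]
            exact Submodule.add_mem M hbi (ha i)
          have : Submodule.Quotient.mk (p := M)
              (r • (p i0 + c * algebraMap R Q x)) =
              Submodule.Quotient.mk (algebraMap R Q i.1 * p i) := by
            rw [Submodule.Quotient.eq]
            have e4 : r • (p i0 + c * algebraMap R Q x)
                - algebraMap R Q i.1 * p i
                = algebraMap R Q i.1 * ((p i0 + c * algebraMap R Q x) - p i) := by
              rw [Algebra.smul_def]
              show algebraMap R Q i.1 * _ - _ = _
              ring
            rw [e4]
            exact hsum
          rw [this, hp i]
      · push_neg at hS
        refine ⟨0, ?_⟩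
        intro x hx
        have hx0 : x = 0 := hS x hx
        subst hx0
        have : ((⟨(0:R), hx⟩ : I)) = 0 := rfl
        rw [this, map_zero, zero_smul, Submodule.Quotient.mk_zero]
    refine ⟨M.mkQ.comp (LinearMap.toSpanSingleton R Q q), ?_⟩
    intro x hx
    rw [hq x hx]
    simp [LinearMap.toSpanSingleton_apply]
  have hInj : Module.Injective R (Q ⧸ M) := Module.Baer.injective baer
  refine ⟨hInj, ?_⟩
  -- cogenerator part
  have hone : Submodule.Quotient.mk (p := M) (1 : Q) ≠ 0 := by
    rw [Ne, Submodule.Quotient.mk_eq_zero]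
    intro h1
    obtain ⟨y, hym, hy⟩ := (hMmem _).mp h1
    have : y = 1 := hinj (by simpa using hy)
    subst this
    exact hm.ne_top (Ideal.eq_top_of_unit_mem m 1 1 hym (mul_one 1))
  have hle : ∀ J : Ideal R, J ≠ ⊤ → J ≤ m := by
    intro J hJ
    rcases hchain J m with h | h
    · exact h
    · exact (hm.eq_of_le hJ h).ge
  intro N _ _ hN
  obtain ⟨x, hx0⟩ := exists_ne (0 : N)
  set ψ : R →ₗ[R] N := LinearMap.toSpanSingleton R N x with hψdef
  have hkerψ : LinearMap.ker ψ ≠ ⊤ := by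
    intro h
    have : (1 : R) ∈ LinearMap.ker ψ := h ▸ Submodule.mem_top
    rw [LinearMap.mem_ker, hψdef, LinearMap.toSpanSingleton_apply, one_smul] at this
    exact hx0 this
  set θ : R →ₗ[R] (Q ⧸ M) := M.mkQ.comp (Algebra.linearMap R Q) with hθdef
  have hker : LinearMap.ker ψ ≤ LinearMap.ker θ := by
    intro r hr
    have hrm : r ∈ m := hle _ hkerψ hr
    rw [LinearMap.mem_ker, hθdef, LinearMap.comp_apply, Submodule.mkQ_apply,
      Submodule.Quotient.mk_eq_zero]
    exact (hMmem _).mpr ⟨r, hrm, rfl⟩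
  set φ : (LinearMap.range ψ) →ₗ[R] (Q ⧸ M) :=
    (Submodule.liftQ (LinearMap.ker ψ) θ hker).comp
      (LinearMap.quotKerEquivRange ψ).symm.toLinearMap with hφdef
  obtain ⟨h, hh⟩ := hInj.out (LinearMap.range ψ).subtype
    (Submodule.injective_subtype _) φ
  refine ⟨h, ?_⟩
  have hmem : ψ 1 ∈ LinearMap.range ψ := ⟨1, rfl⟩
  have hφx : φ ⟨ψ 1, hmem⟩ = Submodule.Quotient.mk (1 : Q) := by
    rw [hφdef, LinearMap.comp_apply]
    have : (LinearMap.quotKerEquivRange ψ).symm ⟨ψ 1, hmem⟩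
        = Submodule.Quotient.mk 1 :=
      LinearMap.quotKerEquivRange_symm_apply_image ψ 1 hmem
    rw [LinearEquiv.coe_toLinearMap, this, Submodule.liftQ_apply]
    simp [hθdef]
  intro hzero
  have := hh ⟨ψ 1, hmem⟩
  rw [hzero] at this
  simp only [LinearMap.zero_apply] at this
  rw [hφx] at this
  exact hone this.symm
end

section
/- Let R be a valuation domain, q ⊆ Spec(R) a prime, and M an R-module such that the torsion-free part F_{q_α}(M) is an R_{q_α}-module for each prime q_α in a family (q_α)_{α<λ} with ⋂_{α<λ} q_α = q and the family decreasing. Then F_q(M) is an R_q-module. -/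
/-- Over a valuation domain: if `(q_α)` is a decreasing family of primes with
intersection `q`, and the torsion-free quotient `F_{q_α}(M)` is an `R_{q_α}`-module
(i.e. `q_α`-divisible) for each `α`, then `F_q(M)` is an `R_q`-module
(i.e. `q`-divisible). -/
theorem torsionFreeQuotient_localized_of_decreasing_family
    (R : Type) [CommRing R] [IsDomain R]
    (hchain : ∀ I J : Ideal R, I ≤ J ∨ J ≤ I)
    (q : Ideal R) (hq : q.IsPrime)
    (M : Type) [AddCommGroup M] [Module R M]
    (ι : Type) [LinearOrder ι] [Nonempty ι]
    (qa : ι → Ideal R) (hprime : ∀ i, (qa i).IsPrime) (hdec : Antitone qa)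
    (hinf : q = ⨅ i, qa i)
    (hdiv : ∀ i, ∀ s ∉ qa i,
      ∀ y ∈ LinearMap.range (LocalizedModule.mkLinearMap (qa i).primeCompl M),
        ∃ z ∈ LinearMap.range (LocalizedModule.mkLinearMap (qa i).primeCompl M),
          s • z = y) :
    ∀ s ∉ q,
      ∀ y ∈ LinearMap.range (LocalizedModule.mkLinearMap q.primeCompl M),
        ∃ z ∈ LinearMap.range (LocalizedModule.mkLinearMap q.primeCompl M),
          s • z = y := by
  intro s hs y hy
  have hle : ∀ i, q ≤ qa i := fun i => hinf ▸ iInf_le qa i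
  obtain ⟨i, hi⟩ : ∃ i, s ∉ qa i := by
    by_contra h
    push_neg at h
    exact hs (hinf ▸ (Submodule.mem_iInf _).mpr h)
  obtain ⟨m, rfl⟩ := hy
  obtain ⟨z, ⟨m', rfl⟩, hz⟩ := hdiv i s hi
    (LocalizedModule.mkLinearMap (qa i).primeCompl M m) ⟨m, rfl⟩
  refine ⟨LocalizedModule.mkLinearMap q.primeCompl M m', ⟨m', rfl⟩, ?_⟩
  simp only [LocalizedModule.mkLinearMap_apply] at hz ⊢
  rw [show (s • LocalizedModule.mk m' 1 : LocalizedModule (qa i).primeCompl M)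
      = LocalizedModule.mk (s • m') 1 from LocalizedModule.smul'_mk s m' 1] at hz
  rw [show (s • LocalizedModule.mk m' 1 : LocalizedModule q.primeCompl M)
      = LocalizedModule.mk (s • m') 1 from LocalizedModule.smul'_mk s m' 1]
  obtain ⟨u, hu⟩ := LocalizedModule.mk_eq.mp hz
  exact LocalizedModule.mk_eq.mpr ⟨⟨u.1, fun h => u.2 (hle i h)⟩, hu⟩
end

section
/- Let R be a commutative ring, q a prime ideal, and (M_i)_{i∈I} a family of R-modules such that Γ_q(M_i) = Soc_p(M_i) for all i, where p is a prime with q ⊊ p. Then Γ_q(∏_i M_i) = ∏_i Γ_q(M_i), and consequently F_q(∏_i M_i) ≅ ∏_i F_q(M_i). -/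
/-- Let `q ⊊ p` be primes of a commutative ring `R` and `(M_i)` a family of modules with
`Γ_q(M_i) = Soc_p(M_i)` for all `i`. Then `Γ_q(∏ M_i) = ∏ Γ_q(M_i)`, and consequently
`F_q(∏ M_i) ≅ ∏ F_q(M_i)` (where `F_q(M) = M / Γ_q(M)`). -/
theorem torsion_of_pi_eq_pi_torsion_of_socle
    (R : Type) [CommRing R] (q p : Ideal R) (hq : q.IsPrime) (hp : p.IsPrime)
    (hqp : q < p)
    (ι : Type) (M : ι → Type) [∀ i, AddCommGroup (M i)] [∀ i, Module R (M i)]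
    (hsoc : ∀ i (m : M i),
      m ∈ Submodule.torsion' R (M i) ↥q.primeCompl ↔ ∀ r ∈ p, r • m = 0) :
    Submodule.torsion' R ((i : ι) → M i) ↥q.primeCompl =
      Submodule.pi Set.univ (fun i => Submodule.torsion' R (M i) ↥q.primeCompl) ∧
    Nonempty
      ((((i : ι) → M i) ⧸ Submodule.torsion' R ((i : ι) → M i) ↥q.primeCompl) ≃ₗ[R]
        ((i : ι) → (M i ⧸ Submodule.torsion' R (M i) ↥q.primeCompl))) := by
  have heq : Submodule.torsion' R ((i : ι) → M i) ↥q.primeCompl =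
      Submodule.pi Set.univ (fun i => Submodule.torsion' R (M i) ↥q.primeCompl) := by
    ext m
    constructor
    · rintro ⟨s, hs⟩ i _
      exact ⟨s, congrFun hs i⟩
    · intro hm
      obtain ⟨s, hsp, hsq⟩ := Set.exists_of_ssubset hqp
      refine ⟨⟨s, hsq⟩, funext fun i => ?_⟩
      exact (hsoc i (m i)).mp (hm i (Set.mem_univ i)) s hsp
  refine ⟨heq, ?_⟩
  rw [heq]
  set P := fun i => Submodule.torsion' R (M i) ↥q.primeCompl with hP
  let f := Submodule.quotientPiLift P (fun i => (P i).mkQ)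
    (fun i => (Submodule.ker_mkQ (P i)).ge)
  refine ⟨LinearEquiv.ofBijective f ⟨?_, ?_⟩⟩
  · rw [← LinearMap.ker_eq_bot, LinearMap.ker_eq_bot']
    intro x hx
    induction x using Quotient.inductionOn' with
    | h x =>
      have : ∀ i, x i ∈ P i := by
        intro i
        have := congrFun (show f (Submodule.Quotient.mk x) = 0 from hx) i
        rw [Submodule.quotientPiLift_mk] at this
        simpa [Submodule.Quotient.mk_eq_zero] using this
      exact (Submodule.Quotient.mk_eq_zero _).mpr (fun i _ => this i)
  · intro y
    choose x hx using fun i => Submodule.Quotient.mk_surjective (P i) (y i)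
    exact ⟨Submodule.Quotient.mk x, by
      simp only [f, Submodule.quotientPiLift_mk]
      exact funext fun i => hx i⟩
end

section
/- Let R be a valuation domain whose spectrum is countable. Then every admissible system of intervals on Spec(R), i.e., every set X of formal intervals [p,q] (p ⊆ q primes, p idempotent) which is disjoint and complete, is nowhere dense as a totally ordered set: (X, <) contains no dense interval, where [p,q] < [p',q'] means q ⊊ p'. More generally: any countable totally ordered set in which every non-empty subset has a supremum and an infimum contains no non-degenerate dense interval. -/
lemma rat_sqrt2_no_lub' : ¬ ∃ q : ℚ, IsLUB {r : ℚ | (r : ℝ) < Real.sqrt 2} q := by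
  rintro ⟨q, hq⟩
  have h1 : Real.sqrt 2 ≤ (q : ℝ) := by
    by_contra h
    push_neg at h
    obtain ⟨r, hr1, hr2⟩ := exists_rat_btwn h
    have : r ≤ q := hq.1 hr2
    exact absurd (Rat.cast_le.mpr this) (not_le.mpr hr1)
  have h2 : (q : ℝ) ≤ Real.sqrt 2 := by
    by_contra h
    push_neg at h
    obtain ⟨r, hr1, hr2⟩ := exists_rat_btwn h
    have hub : r ∈ upperBounds {r : ℚ | (r : ℝ) < Real.sqrt 2} := by
      intro s hs
      exact_mod_cast (hs.trans hr1).le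
    exact absurd (Rat.cast_le.mpr (hq.2 hub)) (not_le.mpr hr2)
  exact irrational_sqrt_two ⟨q, le_antisymm h2 h1⟩

lemma key' (X : Type) [LinearOrder X] [Countable X]
    (hsup : ∀ S : Set X, S.Nonempty → ∃ a, IsLUB S a)
    (x y : X) (hxy : x < y) :
    ∃ s t : X, x ≤ s ∧ s < t ∧ t ≤ y ∧ ¬∃ z, s < z ∧ z < t := by
  by_contra hcon
  push_neg at hcon
  have H : ∀ s t : X, x ≤ s → s < t → t ≤ y → ∃ z, s < z ∧ z < t := by
    intro s t h1 h2 h3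
    exact hcon s t h1 h2 h3
  set J := Set.Ioo x y with hJ
  obtain ⟨w, hw1, hw2⟩ := H x y le_rfl hxy le_rfl
  haveI : Nonempty ↥J := ⟨⟨w, hw1, hw2⟩⟩
  haveI : DenselyOrdered ↥J := by
    constructor
    rintro a b hab
    obtain ⟨z, hz1, hz2⟩ := H a b a.2.1.le (Subtype.coe_lt_coe.mpr hab) b.2.2.le
    exact ⟨⟨z, a.2.1.trans hz1, hz2.trans b.2.2⟩, hz1, hz2⟩
  haveI : NoMinOrder ↥J := by
    constructor
    intro a
    obtain ⟨z, hz1, hz2⟩ := H x a le_rfl a.2.1 a.2.2.le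
    exact ⟨⟨z, hz1, hz2.trans a.2.2⟩, hz2⟩
  haveI : NoMaxOrder ↥J := by
    constructor
    intro a
    obtain ⟨z, hz1, hz2⟩ := H a y a.2.1.le a.2.2 le_rfl
    exact ⟨⟨z, a.2.1.trans hz1, hz2⟩, hz1⟩
  obtain ⟨e⟩ : Nonempty (↥J ≃o ℚ) := Order.iso_of_countable_dense ↥J ℚ
  set S : Set ℚ := {r : ℚ | (r : ℝ) < Real.sqrt 2} with hS
  have hsqrt2 : (1 : ℝ) < Real.sqrt 2 := by
    rw [show (1 : ℝ) = Real.sqrt 1 from Real.sqrt_one.symm]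
    exact Real.sqrt_lt_sqrt (by norm_num) (by norm_num)
  have hsqrt2' : Real.sqrt 2 < 2 := (Real.sqrt_lt' (by norm_num)).mpr (by norm_num)
  set S' : Set ↥J := e ⁻¹' S with hS'
  have hone : e.symm 1 ∈ S' := by
    simp only [hS', Set.mem_preimage, OrderIso.apply_symm_apply]
    simpa [hS] using hsqrt2
  have hT : (Subtype.val '' S').Nonempty := ⟨_, Set.mem_image_of_mem _ hone⟩
  obtain ⟨a, ha⟩ := hsup (Subtype.val '' S') hT
  have hub2 : (e.symm 2 : X) ∈ upperBounds (Subtype.val '' S') := by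
    rintro t ⟨s', hs', rfl⟩
    have h2 : e s' ≤ (2 : ℚ) := by
      have : ((e s' : ℚ) : ℝ) < 2 := hs'.trans hsqrt2'
      exact_mod_cast this.le
    have : s' ≤ e.symm 2 := by
      rw [← e.le_iff_le, OrderIso.apply_symm_apply]; exact h2
    exact this
  have hax : x < a := lt_of_lt_of_le (e.symm 1).2.1 (ha.1 (Set.mem_image_of_mem _ hone))
  have hay : a < y := lt_of_le_of_lt (ha.2 hub2) (e.symm 2).2.2
  have hA : IsLUB S' (⟨a, hax, hay⟩ : ↥J) := by
    constructor
    · intro s' hs'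
      exact Subtype.coe_le_coe.mp (ha.1 (Set.mem_image_of_mem _ hs'))
    · intro c hc
      refine Subtype.coe_le_coe.mp (ha.2 ?_)
      rintro t ⟨s', hs', rfl⟩
      exact Subtype.coe_le_coe.mpr (hc hs')
  have hlub : IsLUB S (e ⟨a, hax, hay⟩) := by
    have himg : e '' S' = S := by
      rw [hS', Set.image_preimage_eq _ e.surjective]
    rw [← himg]
    exact e.isLUB_image'.mpr hA
  exact rat_sqrt2_no_lub' ⟨_, hlub⟩


structure AuxPair {α : Type} (X : Set α) : Type where
  val : α
  mem : val ∈ X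

theorem AuxPair.ext' {α : Type} {X : Set α} {a b : AuxPair X} (h : a.val = b.val) : a = b := by
  cases a; cases b; cases h; rfl

/-- Over a valuation domain with countable spectrum, every admissible system of intervals
(a disjoint and complete set of formal intervals `[p,q]` of primes with `p` idempotent)
is nowhere dense as a totally ordered set, where `[p,q] < [p',q']` iff `q ⊊ p'`.
More generally, any countable totally ordered set in which every non-empty subset has a
supremum and an infimum contains no non-degenerate dense interval. -/
theorem admissible_system_nowhere_dense_of_countable_spectrum :
    (∀ (R : Type) [CommRing R] [IsDomain R],
      (∀ I J : Ideal R, I ≤ J ∨ J ≤ I) →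
      Countable (PrimeSpectrum R) →
      ∀ X : Set (Ideal R × Ideal R),
        (∀ c ∈ X, c.1.IsPrime ∧ c.2.IsPrime ∧ c.1 ≤ c.2 ∧ c.1 * c.1 = c.1) →
        (∀ c ∈ X, ∀ d ∈ X, c ≠ d → c.1 ≤ d.1 → c.2 < d.1) →
        (∀ Y ⊆ X, Y.Nonempty →
          (∃ μ ∈ X, μ.1 = sSup (Prod.fst '' Y)) ∧
          (∃ ν ∈ X, ν.2 = sInf (Prod.snd '' Y))) →
        ∀ c ∈ X, ∀ d ∈ X, c.2 < d.1 →
          ∃ s ∈ X, ∃ t ∈ X, (c = s ∨ c.2 < s.1) ∧ s.2 < t.1 ∧ (t = d ∨ t.2 < d.1) ∧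
            ¬∃ z ∈ X, s.2 < z.1 ∧ z.2 < t.1) ∧
    (∀ (X : Type) [LinearOrder X] [Countable X],
      (∀ S : Set X, S.Nonempty → ∃ a, IsLUB S a) →
      (∀ S : Set X, S.Nonempty → ∃ a, IsGLB S a) →
      ∀ x y : X, x < y →
        ∃ s t : X, x ≤ s ∧ s < t ∧ t ≤ y ∧ ¬∃ z, s < z ∧ z < t) := by
  constructor
  · intro R _ _ hval hcount X h1 hdisj hcomp c hcX d hdX hcd
    haveI := hcount
    have hle : ∀ a : AuxPair X, a.val.1 ≤ a.val.2 := fun a => (h1 a.val a.mem).2.2.1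
    letI : LinearOrder (AuxPair X) :=
      { le := fun a b => a = b ∨ a.val.2 < b.val.1
        lt := fun a b => a.val.2 < b.val.1
        le_refl := fun a => Or.inl rfl
        le_trans := by
          rintro a b c (rfl | hab) hbc
          · exact hbc
          rcases hbc with rfl | hbc
          · exact Or.inr hab
          exact Or.inr (hab.trans_le ((hle b).trans hbc.le))
        lt_iff_le_not_ge := by
          intro a b
          constructor
          · intro h
            refine ⟨Or.inr h, ?_⟩
            rintro (h' | h')
            · cases h'; exact absurd h (hle a).not_gt
            · exact lt_irrefl _ (((h.trans_le (hle b)).trans h').trans_le (hle a))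
          · rintro ⟨(rfl | h), hn⟩
            · exact absurd (Or.inl rfl) hn
            · exact h
        le_antisymm := by
          rintro a b (rfl | hab) hba
          · rfl
          rcases hba with rfl | hba
          · rfl
          exact absurd (((hab.trans_le (hle b)).trans hba).trans_le (hle a)) (lt_irrefl _)
        le_total := by
          intro a b
          by_cases hab : a = b
          · exact Or.inl (Or.inl hab)
          · have hne : a.val ≠ b.val := fun hv => hab (AuxPair.ext' hv)
            rcases hval a.val.1 b.val.1 with h | h
            · exact Or.inl (Or.inr (hdisj a.val a.mem b.val b.mem hne h))
            · exact Or.inr (Or.inr (hdisj b.val b.mem a.val a.mem (Ne.symm hne) h))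
        toDecidableLE := fun _ _ => Classical.dec _ }
    haveI : Countable (AuxPair X) := by
      have hinj : Function.Injective
          (fun a : AuxPair X => ((⟨a.val.1, (h1 a.val a.mem).1⟩ : PrimeSpectrum R),
            (⟨a.val.2, (h1 a.val a.mem).2.1⟩ : PrimeSpectrum R))) := by
        intro a b hab
        simp only [Prod.mk.injEq, PrimeSpectrum.mk.injEq] at hab
        exact AuxPair.ext' (Prod.ext hab.1 hab.2)
      exact Countable.of_equiv _ (Equiv.ofInjective _ hinj).symm
    have hsup : ∀ S : Set (AuxPair X), S.Nonempty → ∃ a, IsLUB S a := by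
      intro S hS
      have hYsub : AuxPair.val '' S ⊆ X := by
        rintro t ⟨s, _, rfl⟩; exact s.mem
      have hYne : (AuxPair.val '' S).Nonempty := hS.image _
      obtain ⟨⟨μ, hμX, hμ⟩, -⟩ := hcomp _ hYsub hYne
      refine ⟨⟨μ, hμX⟩, ?_, ?_⟩
      · intro s hs
        by_cases hsm : s.val = μ
        · exact Or.inl (AuxPair.ext' hsm)
        · have hsμ : s.val.1 ≤ μ.1 := by
            rw [hμ]
            exact le_sSup ⟨s.val, Set.mem_image_of_mem _ hs, rfl⟩
          exact Or.inr (hdisj s.val s.mem μ hμX hsm hsμ)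
      · intro u hu
        by_cases hum : (⟨μ, hμX⟩ : AuxPair X) = u
        · exact Or.inl hum
        · by_contra hcon2
          have hlt : u.val.2 < μ.1 := by
            rcases le_total (⟨μ, hμX⟩ : AuxPair X) u with h | h
            · exact absurd h hcon2
            · rcases h with h | h
              · exact absurd h.symm hum
              · exact h
          rw [hμ] at hlt
          have hex : ∃ p ∈ Prod.fst '' (AuxPair.val '' S), ¬ p ≤ u.val.2 := by
            by_contra hall
            push_neg at hall
            exact absurd hlt (sSup_le hall).not_gt
          obtain ⟨p, ⟨t, ht, rfl⟩, hp⟩ := hex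
          obtain ⟨sy, hsy, rfl⟩ := ht
          have hup : u.val.2 < sy.val.1 := by
            rcases hval sy.val.1 u.val.2 with h | h
            · exact absurd h hp
            · exact lt_of_le_of_ne h (fun hv => hp (le_of_eq hv.symm))
          rcases hu hsy with h | h
          · rw [h] at hup
            exact absurd hup (hle u).not_gt
          · exact lt_irrefl _ (((hup.trans_le (hle sy)).trans h).trans_le (hle u))
    obtain ⟨s, t, h₁, h₂, h₃, h₄⟩ :=
      key' (AuxPair X) hsup ⟨c, hcX⟩ ⟨d, hdX⟩ (show c.2 < d.1 from hcd)
    refine ⟨s.val, s.mem, t.val, t.mem, ?_, h₂, ?_, ?_⟩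
    · exact Or.imp (fun h => congrArg AuxPair.val h) id h₁
    · exact Or.imp (fun h => congrArg AuxPair.val h) id h₃
    · rintro ⟨z, hzX, hz1, hz2⟩
      exact h₄ ⟨⟨z, hzX⟩, hz1, hz2⟩
  · intro X _ _ hsup _ x y hxy
    exact key' X hsup x y hxy
end
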